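/- If ν* ∈ P_+ is an equilibrium measure for G (i.e. ν* is a minimizer of G(ν,ν) over P and ν*(x) > 0 for all x), then G(x,ν*) = Γ(G) for every x ∈ X. -/
import Mathlib


open Finset

/-- If `ν* ∈ P₊` (a probability measure with all values positive) is an
equilibrium measure for the symmetric matrix `G`, then `G(x,ν*) = Γ(G) = G(ν*,ν*)`
for every `x ∈ X`. -/
theorem frostman_everywhere_positive {X : Type*} [Fintype X] [Nonempty X]
    (G : X → X → ℝ) (hGsym : ∀ x y, G x y = G y x)
    (νs : X → ℝ) (hνs_pos : ∀ x, 0 < νs x) (hνs_sum : ∑ x, νs x = 1)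
    (hmin : ∀ ν : X → ℝ, (∀ x, 0 ≤ ν x) → ∑ x, ν x = 1 →
      ∑ x, ∑ y, νs x * G x y * νs y ≤ ∑ x, ∑ y, ν x * G x y * ν y) :
    ∀ x : X, ∑ y, G x y * νs y = ∑ x', ∑ y, νs x' * G x' y * νs y := by
  classical
  intro x
  set E := ∑ x', ∑ y, νs x' * G x' y * νs y with hE
  set c := (∑ y, G x y * νs y) - E with hc
  set μ : X → ℝ := fun y => (if y = x then (1:ℝ) else 0) - νs y with hμ
  set Q := ∑ x', ∑ y, μ x' * G x' y * μ y with hQ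
  have hνsx1 : νs x ≤ 1 := by
    rw [← hνs_sum]
    exact Finset.single_le_sum (fun i _ => (hνs_pos i).le) (mem_univ x)
  have hsumμ : ∑ y, μ y = 0 := by
    simp [hμ, Finset.sum_sub_distrib, hνs_sum]
  have hcross : ∑ x', ∑ y, νs x' * G x' y * μ y = c := by
    have h1 : ∀ x', ∑ y, νs x' * G x' y * μ y
        = νs x' * G x' x - ∑ y, νs x' * G x' y * νs y := by
      intro x'
      simp only [hμ, mul_sub, Finset.sum_sub_distrib]
      congr 1
      simp [mul_ite]
    rw [Finset.sum_congr rfl (fun x' _ => h1 x'), Finset.sum_sub_distrib, hc, hE]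
    congr 1
    exact Finset.sum_congr rfl fun x' _ => by rw [hGsym x x']; ring
  have hcross2 : ∑ x', ∑ y, μ x' * G x' y * νs y = c := by
    rw [Finset.sum_comm, ← hcross]
    exact Finset.sum_congr rfl fun y _ => Finset.sum_congr rfl fun x' _ => by
      rw [hGsym x' y]; ring
  have hexp : ∀ t : ℝ, ∑ x', ∑ y, (νs x' + t * μ x') * G x' y * (νs y + t * μ y)
      = E + 2 * t * c + t ^ 2 * Q := by
    intro t
    have expand : ∀ x' y, (νs x' + t * μ x') * G x' y * (νs y + t * μ y)
        = νs x' * G x' y * νs y + t * (νs x' * G x' y * μ y)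
          + t * (μ x' * G x' y * νs y) + t ^ 2 * (μ x' * G x' y * μ y) := by
      intro x' y; ring
    simp only [expand, Finset.sum_add_distrib, ← Finset.mul_sum]
    rw [hcross, hcross2, ← hE, ← hQ]
    ring
  have key : ∀ t : ℝ, -νs x ≤ t → t ≤ 1 → 0 ≤ 2 * t * c + t ^ 2 * Q := by
    intro t ht1 ht2
    have h1 := hmin (fun y => νs y + t * μ y) ?_ ?_
    · rw [hexp t] at h1
      linarith
    · intro y
      by_cases hy : y = x
      · subst hy
        simp only [hμ, eq_self_iff_true, if_true]
        nlinarith [hνs_pos y]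
      · simp only [hμ, if_neg hy]
        nlinarith [hνs_pos y]
    · simp [Finset.sum_add_distrib, ← Finset.mul_sum, hsumμ, hνs_sum]
  have hc0 : c = 0 := by
    by_contra hne
    have habsc : 0 < |c| := abs_pos.mpr hne
    have hQ1 : (0:ℝ) < |Q| + 1 := by positivity
    set s := min (min (νs x) 1) (|c| / (|Q| + 1)) with hs
    have hspos : 0 < s := by
      apply lt_min (lt_min (hνs_pos x) one_pos)
      positivity
    have hs1 : s ≤ νs x := le_trans (min_le_left _ _) (min_le_left _ _)
    have hs2 : s ≤ 1 := le_trans (min_le_left _ _) (min_le_right _ _)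
    have hs3 : s * (|Q| + 1) ≤ |c| := by
      rw [← le_div_iff₀ hQ1]
      exact min_le_right _ _
    have hQabs : Q ≤ |Q| := le_abs_self Q
    rcases lt_or_gt_of_ne hne with hneg | hpos
    · -- c < 0, take t = s
      have hk := key s (by linarith) hs2
      have habs' : |c| = -c := abs_of_neg hneg
      nlinarith [mul_le_mul_of_nonneg_left hQabs (mul_nonneg hspos.le hspos.le),
        mul_le_mul_of_nonneg_left hs3 hspos.le]
    · -- c > 0, take t = -s
      have hk := key (-s) (by linarith) (by linarith)
      have habs' : |c| = c := abs_of_pos hpos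
      nlinarith [mul_le_mul_of_nonneg_left hQabs (mul_nonneg hspos.le hspos.le),
        mul_le_mul_of_nonneg_left hs3 hspos.le]
  linarith [hc0]
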